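/- In K = F_{2^τ}((π)), the image of the quadratic defect δ(a) = ⋂_{h∈K}(h² + a), restricted to nonsquare elements a, is exactly the set {(π^{2t+1}) : t ∈ ℤ}. Moreover |δ(a)| ≤ |a| for every a ∈ K, and for each a there exists b ∈ K with |δ(a)| = |δ(a + b²)| = |a + b²|. -/

import Mathlib

noncomputable section

/-- The finite field with `2 ^ τ` elements. -/
abbrev Fq (τ : ℕ) := GaloisField 2 τ

/-- The field of formal Laurent series `K = F_{2^τ}((π))`. -/
abbrev Kk (τ : ℕ) := LaurentSeries (Fq τ)

/-- The ring of integers `O = F_{2^τ}[[π]]`. -/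
abbrev Ok (τ : ℕ) := PowerSeries (Fq τ)

/-- The Artin–Schreier defect `D(a) = ⋂_{h ∈ K} (h² + h + a)`, an intersection of
principal fractional `O`-ideals (as `O`-submodules of `K`). -/
def ASdefect (τ : ℕ) (a : Kk τ) : Submodule (Ok τ) (Kk τ) :=
  ⨅ h : Kk τ, Submodule.span (Ok τ) {h ^ 2 + h + a}

/-- The uniformizer `π` of `K`, viewed as a Laurent series. -/
def pp (τ : ℕ) : Kk τ := algebraMap (Ok τ) (Kk τ) PowerSeries.X

/-- The quadratic defect `δ(a) = ⋂_{h ∈ K} (h² + a)`. -/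
def Qdefect (τ : ℕ) (a : Kk τ) : Submodule (Ok τ) (Kk τ) :=
  ⨅ h : Kk τ, Submodule.span (Ok τ) {h ^ 2 + a}




open HahnSeries

namespace QdefectAux

variable {R : Type*} [Field R] [CharP R 2]

lemma charP_laurent : CharP (LaurentSeries R) 2 :=
  charP_of_injective_ringHom (f := (HahnSeries.C : R →+* LaurentSeries R))
    (fun a b h => by
      simpa [HahnSeries.C_apply, HahnSeries.coeff_single_same] using
        congrArg (fun x : LaurentSeries R => x.coeff 0) h) 2

/-- In char 2, the coefficient of a square at an even index. -/
lemma sq_coeff_even (b : LaurentSeries R) (n : ℤ) :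
    (b * b).coeff (2 * n) = b.coeff n * b.coeff n := by
  rw [HahnSeries.coeff_mul]
  set s := Finset.antidiagonal b.isPWO_support b.isPWO_support (2 * n) with hs
  have herase : ∑ p ∈ s.erase (n, n), b.coeff p.1 * b.coeff p.2 = 0 := by
    refine Finset.sum_involution (fun p _ => (p.2, p.1)) ?_ ?_ ?_ ?_
    · intro p _; rw [mul_comm]; exact CharTwo.add_self_eq_zero _
    · rintro ⟨i, j⟩ hp _
      show ((j, i) : ℤ × ℤ) ≠ (i, j)
      rw [Finset.mem_erase, Finset.mem_antidiagonal] at hp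
      obtain ⟨hne, h1, h2, h3⟩ := hp
      intro hEq
      rw [Prod.mk.injEq] at hEq
      exact hne (by rw [Prod.mk.injEq]; omega)
    · rintro ⟨i, j⟩ hp
      show ((j, i) : ℤ × ℤ) ∈ s.erase (n, n)
      rw [Finset.mem_erase, Finset.mem_antidiagonal] at hp ⊢
      obtain ⟨hne, h1, h2, h3⟩ := hp
      refine ⟨fun hEq => ?_, h2, h1, by omega⟩
      rw [Prod.mk.injEq] at hEq
      exact hne (by rw [Prod.mk.injEq]; omega)
    · intro p _; rfl
  by_cases hn : (n, n) ∈ s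
  · have := Finset.sum_erase_add s (fun p => b.coeff p.1 * b.coeff p.2) hn
    rw [← this, herase, zero_add]
  · have hbn : b.coeff n = 0 := by
      by_contra h
      exact hn (Finset.mem_antidiagonal.2 ⟨h, h, (two_mul n).symm⟩)
    rw [hbn, mul_zero, ← Finset.erase_eq_of_notMem hn, herase]

/-- In char 2, the coefficient of a square at an odd index vanishes. -/
lemma sq_coeff_odd (b : LaurentSeries R) (n : ℤ) :
    (b * b).coeff (2 * n + 1) = 0 := by
  rw [HahnSeries.coeff_mul]
  refine Finset.sum_involution (fun p _ => (p.2, p.1)) ?_ ?_ ?_ ?_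
  · intro p _; rw [mul_comm]; exact CharTwo.add_self_eq_zero _
  · rintro ⟨i, j⟩ hp _
    show ((j, i) : ℤ × ℤ) ≠ (i, j)
    rw [Finset.mem_antidiagonal] at hp
    intro hEq
    rw [Prod.mk.injEq] at hEq
    omega
  · rintro ⟨i, j⟩ hp
    show ((j, i) : ℤ × ℤ) ∈ Finset.antidiagonal b.isPWO_support b.isPWO_support (2 * n + 1)
    rw [Finset.mem_antidiagonal] at hp ⊢
    exact ⟨hp.2.1, hp.1, by omega⟩
  · intro p _; rfl

variable [PerfectRing R 2]

/-- The square root of the even part of a Laurent series, in char 2. -/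
def evenRoot (a : LaurentSeries R) : LaurentSeries R where
  coeff n := (frobeniusEquiv R 2).symm (a.coeff (2 * n))
  isPWO_support' := by
    refine Set.IsWF.isPWO (BddBelow.wellFoundedOn_lt ⟨-(a.order.natAbs : ℤ), ?_⟩)
    intro n hn
    simp only [Set.mem_setOf_eq, Function.mem_support] at hn
    have h2 : a.coeff (2 * n) ≠ 0 := fun h => hn (by rw [h, map_zero])
    have := HahnSeries.order_le_of_coeff_ne_zero h2
    omega

lemma evenRoot_coeff (a : LaurentSeries R) (n : ℤ) :
    (evenRoot a).coeff n = (frobeniusEquiv R 2).symm (a.coeff (2 * n)) := rfl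

lemma evenRoot_sq_coeff_even (a : LaurentSeries R) (n : ℤ) :
    ((evenRoot a) ^ 2).coeff (2 * n) = a.coeff (2 * n) := by
  rw [sq, sq_coeff_even, evenRoot_coeff, ← sq, ← frobenius_def,
    ← coe_frobeniusEquiv R 2, RingEquiv.apply_symm_apply]

lemma evenRoot_sq_coeff_odd (a : LaurentSeries R) (n : ℤ) :
    ((evenRoot a) ^ 2).coeff (2 * n + 1) = 0 := by
  rw [sq, sq_coeff_odd]

/-- The odd part of a Laurent series: `a - (evenRoot a)^2` (char 2). -/
def oddPart (a : LaurentSeries R) : LaurentSeries R := a + (evenRoot a) ^ 2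

lemma oddPart_coeff_even (a : LaurentSeries R) (n : ℤ) :
    (oddPart a).coeff (2 * n) = 0 := by
  rw [oddPart, HahnSeries.coeff_add, evenRoot_sq_coeff_even]
  exact CharTwo.add_self_eq_zero _

lemma oddPart_coeff_odd (a : LaurentSeries R) (n : ℤ) :
    (oddPart a).coeff (2 * n + 1) = a.coeff (2 * n + 1) := by
  rw [oddPart, HahnSeries.coeff_add, evenRoot_sq_coeff_odd, add_zero]

lemma oddPart_order_odd {a : LaurentSeries R} (h : oddPart a ≠ 0) :
    Odd ((oddPart a).order) := by
  rcases Int.even_or_odd ((oddPart a).order) with ⟨m, hm⟩ | ho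
  · exact absurd (by rw [hm, ← two_mul]; exact oddPart_coeff_even a m)
      ((HahnSeries.coeff_order_eq_zero.not.mpr h))
  · exact ho

lemma evenRoot_oddPart (a : LaurentSeries R) : evenRoot (oddPart a) = 0 := by
  ext n
  rw [evenRoot_coeff, oddPart_coeff_even, map_zero, HahnSeries.coeff_zero]

lemma oddPart_oddPart (a : LaurentSeries R) : oddPart (oddPart a) = oddPart a := by
  have h1 : oddPart (oddPart a) = oddPart a + (evenRoot (oddPart a)) ^ 2 := rfl
  rw [h1, evenRoot_oddPart]
  simp

/-- Non-squares have nonzero odd part. -/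
lemma oddPart_ne_zero {a : LaurentSeries R} (h : ¬ ∃ x : LaurentSeries R, a = x ^ 2) :
    oddPart a ≠ 0 := by
  haveI : CharP (LaurentSeries R) 2 := charP_laurent
  intro h0
  exact h ⟨evenRoot a, by
    have := CharTwo.add_eq_iff_eq_add.mp h0
    simpa using this⟩

/-- If orders differ, the sum is nonzero and its order is at most either order. -/
lemma add_ne_zero_and_order_le {x y : LaurentSeries R} (hx : x ≠ 0) (hy : y ≠ 0)
    (hne : x.order ≠ y.order) : x + y ≠ 0 ∧ (x + y).order ≤ y.order := by
  rcases lt_or_gt_of_ne hne with hlt | hlt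
  · have hc : (x + y).coeff x.order ≠ 0 := by
      rw [HahnSeries.coeff_add, HahnSeries.coeff_eq_zero_of_lt_order hlt, add_zero]
      exact (HahnSeries.coeff_order_eq_zero.not.mpr hx)
    exact ⟨fun h0 => hc (by rw [h0, HahnSeries.coeff_zero]),
      le_of_lt (lt_of_le_of_lt (HahnSeries.order_le_of_coeff_ne_zero hc) hlt)⟩
  · have hc : (x + y).coeff y.order ≠ 0 := by
      rw [HahnSeries.coeff_add, HahnSeries.coeff_eq_zero_of_lt_order hlt, zero_add]
      exact (HahnSeries.coeff_order_eq_zero.not.mpr hy)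
    exact ⟨fun h0 => hc (by rw [h0, HahnSeries.coeff_zero]),
      HahnSeries.order_le_of_coeff_ne_zero hc⟩

/-- Divisibility from order comparison. -/
lemma mem_span_of_order_le {x y : LaurentSeries R} (hy : y ≠ 0) (h : y.order ≤ x.order) :
    x ∈ Submodule.span (PowerSeries R) {y} := by
  by_cases hx : x = 0
  · simp [hx]
  · set u : LaurentSeries R := x * y⁻¹ with hu
    have hyinv : (y⁻¹ : LaurentSeries R) ≠ 0 := inv_ne_zero hy
    have hordinv : (y⁻¹ : LaurentSeries R).order = -y.order := by
      have h1 : y * y⁻¹ = 1 := mul_inv_cancel₀ hy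
      have := HahnSeries.order_mul hy hyinv
      rw [h1, HahnSeries.order_one] at this
      omega
    have hune : u ≠ 0 := mul_ne_zero hx hyinv
    have huord : 0 ≤ u.order := by
      rw [hu, HahnSeries.order_mul hx hyinv, hordinv]; omega
    have hxu : x = u * y := by
      rw [hu, mul_assoc, inv_mul_cancel₀ hy, mul_one]
    rw [Submodule.mem_span_singleton]
    refine ⟨PowerSeries.X ^ u.order.natAbs * u.powerSeriesPart, ?_⟩
    rw [Algebra.smul_def, LaurentSeries.coe_algebraMap]
    rw [show ((HahnSeries.ofPowerSeries ℤ R) (PowerSeries.X ^ u.order.natAbs *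
        u.powerSeriesPart)) = u from ?_, ← hxu]
    have hn : (u.order.natAbs : ℤ) = u.order := Int.natAbs_of_nonneg huord
    exact LaurentSeries.X_order_mul_powerSeriesPart hn

lemma single_zpow (z : ℤ) :
    (HahnSeries.single (1 : ℤ) (1 : R)) ^ z = HahnSeries.single z (1 : R) := by
  have hnat : ∀ n : ℕ, (HahnSeries.single (1 : ℤ) (1 : R)) ^ n
      = HahnSeries.single (n : ℤ) (1 : R) := by
    intro n
    rw [HahnSeries.single_pow, one_pow, nsmul_eq_mul, mul_one]
  rcases z with n | n
  · rw [Int.ofNat_eq_coe, zpow_natCast, hnat]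
  · rw [zpow_negSucc, hnat]
    refine inv_eq_of_mul_eq_one_left ?_
    rw [HahnSeries.single_mul_single, one_mul]
    have hz : Int.negSucc n + ((n + 1 : ℕ) : ℤ) = 0 := by
      rw [Int.negSucc_eq]; push_cast; ring
    rw [hz]
    rfl

lemma order_single_zpow (z : ℤ) [Nontrivial R] :
    ((HahnSeries.single (1 : ℤ) (1 : R)) ^ z).order = z := by
  rw [single_zpow, HahnSeries.order_single one_ne_zero]

/-- The key computation: the quadratic defect is the ideal generated by the odd part. -/
lemma iInf_span_eq (a : LaurentSeries R) :
    (⨅ h : LaurentSeries R, Submodule.span (PowerSeries R) {h ^ 2 + a})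
      = Submodule.span (PowerSeries R) {oddPart a} := by
  haveI : CharP (LaurentSeries R) 2 := charP_laurent
  apply le_antisymm
  · refine le_trans (iInf_le _ (evenRoot a)) (le_of_eq ?_)
    rw [add_comm]
    rfl
  · refine le_iInf fun h => ?_
    rw [Submodule.span_le, Set.singleton_subset_iff, SetLike.mem_coe]
    have hkey : h ^ 2 + a = (h + evenRoot a) ^ 2 + oddPart a := by
      rw [CharTwo.add_sq, oddPart]
      have : (evenRoot a) ^ 2 + ((evenRoot a) ^ 2) = 0 := CharTwo.add_self_eq_zero _
      linear_combination -this
    by_cases hd : oddPart a = 0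
    · rw [hd]
      exact Submodule.zero_mem _
    · by_cases hhc : h + evenRoot a = 0
      · rw [hkey, hhc]
        rw [show (0 : LaurentSeries R) ^ 2 + oddPart a = oddPart a by ring]
        exact Submodule.mem_span_singleton_self _
      · have hsq : ((h + evenRoot a) ^ 2).order = 2 * (h + evenRoot a).order := by
          rw [sq, HahnSeries.order_mul hhc hhc]; ring
        have hsqne : (h + evenRoot a) ^ 2 ≠ 0 := pow_ne_zero _ hhc
        obtain ⟨m, hm⟩ := oddPart_order_odd hd
        have hne : ((h + evenRoot a) ^ 2).order ≠ (oddPart a).order := by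
          rw [hsq, hm]; omega
        obtain ⟨hne0, hle⟩ := add_ne_zero_and_order_le hsqne hd hne
        rw [hkey]
        exact mem_span_of_order_le hne0 hle

end QdefectAux

open QdefectAux in
/-- the image of the quadratic defect on nonsquares is exactly
`{(π^{2t+1}) : t ∈ ℤ}`; moreover `|δ(a)| ≤ |a|`, i.e. `δ(a) ⊆ (a)`, for every `a`,
and there is `b ∈ K` with `|δ(a)| = |δ(a + b²)| = |a + b²|`. -/
theorem Qdefect_spec (τ : ℕ) (hτ : 0 < τ) :
    (∀ a : Kk τ, ¬ (∃ x : Kk τ, a = x ^ 2) →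
        ∃ t : ℤ, Qdefect τ a = Submodule.span (Ok τ) {pp τ ^ (2 * t + 1)}) ∧
      (∀ t : ℤ, ∃ a : Kk τ, ¬ (∃ x : Kk τ, a = x ^ 2) ∧
        Qdefect τ a = Submodule.span (Ok τ) {pp τ ^ (2 * t + 1)}) ∧
      (∀ a : Kk τ, Qdefect τ a ≤ Submodule.span (Ok τ) {a}) ∧
      (∀ a : Kk τ, ∃ b : Kk τ, Qdefect τ a = Qdefect τ (a + b ^ 2) ∧
        Qdefect τ a = Submodule.span (Ok τ) {a + b ^ 2}) := by
  have hQ : ∀ a : Kk τ, Qdefect τ a = Submodule.span (Ok τ) {oddPart a} :=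
    fun a => iInf_span_eq a
  have hpp : ∀ z : ℤ, pp τ ^ z = HahnSeries.single z (1 : Fq τ) := by
    intro z
    have h1 : pp τ = HahnSeries.single (1 : ℤ) (1 : Fq τ) := by
      rw [pp, LaurentSeries.coe_algebraMap, HahnSeries.ofPowerSeries_X]
    rw [h1, single_zpow]
  refine ⟨?_, ?_, ?_, ?_⟩
  · intro a ha
    have hd := oddPart_ne_zero ha
    obtain ⟨t, ht⟩ := oddPart_order_odd hd
    have ht' : (oddPart a).order = 2 * t + 1 := by omega
    refine ⟨t, ?_⟩
    rw [hQ a, hpp (2 * t + 1)]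
    have hsne : (HahnSeries.single ((2 * t + 1 : ℤ)) (1 : Fq τ)) ≠ 0 :=
      HahnSeries.single_ne_zero one_ne_zero
    have hords : (HahnSeries.single ((2 * t + 1 : ℤ)) (1 : Fq τ)).order = 2 * t + 1 :=
      HahnSeries.order_single one_ne_zero
    apply le_antisymm
    · rw [Submodule.span_le, Set.singleton_subset_iff, SetLike.mem_coe]
      exact mem_span_of_order_le hsne (by rw [hords, ht'])
    · rw [Submodule.span_le, Set.singleton_subset_iff, SetLike.mem_coe]
      exact mem_span_of_order_le hd (by rw [hords, ht'])
  · intro t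
    have hane : pp τ ^ (2 * t + 1) ≠ 0 := by
      rw [hpp]; exact HahnSeries.single_ne_zero one_ne_zero
    have horda : (pp τ ^ (2 * t + 1)).order = 2 * t + 1 := by
      rw [hpp]; exact HahnSeries.order_single one_ne_zero
    refine ⟨pp τ ^ (2 * t + 1), ?_, ?_⟩
    · rintro ⟨x, hx⟩
      have hxne : x ≠ 0 := by
        rintro rfl
        exact hane (by rw [hx]; simp)
      have hsq : (x ^ 2).order = 2 * x.order := by
        rw [sq, HahnSeries.order_mul hxne hxne]; ring
      rw [hx, hsq] at horda
      omega
    · rw [hQ]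
      have he : evenRoot (pp τ ^ (2 * t + 1)) = 0 := by
        ext n
        rw [evenRoot_coeff, hpp, HahnSeries.coeff_single,
          if_neg (by omega : ¬ ((2 * n : ℤ) = 2 * t + 1)), map_zero, HahnSeries.coeff_zero]
      have hodd : oddPart (pp τ ^ (2 * t + 1)) = pp τ ^ (2 * t + 1) := by
        rw [oddPart, he]; simp
      rw [hodd]
  · intro a
    rw [hQ]
    by_cases hd : oddPart a = 0
    · rw [hd, Submodule.span_zero_singleton]
      exact bot_le
    · have hane : a ≠ 0 := by
        rintro rfl
        apply hd
        have h0 : evenRoot (0 : Kk τ) = 0 := by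
          ext n; rw [evenRoot_coeff]; simp
        rw [oddPart, h0]; simp
      obtain ⟨m, hm⟩ := oddPart_order_odd hd
      have hm' : (oddPart a).order = 2 * m + 1 := by omega
      have hcoeff : a.coeff ((oddPart a).order) ≠ 0 := by
        have h1 := (HahnSeries.coeff_order_eq_zero.not.mpr hd)
        rw [hm'] at h1 ⊢
        rw [← oddPart_coeff_odd a m]
        exact h1
      rw [Submodule.span_le, Set.singleton_subset_iff, SetLike.mem_coe]
      exact mem_span_of_order_le hane (HahnSeries.order_le_of_coeff_ne_zero hcoeff)
  · intro a
    have h1 : a + evenRoot a ^ 2 = oddPart a := rfl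
    refine ⟨evenRoot a, ?_, ?_⟩
    · rw [hQ, hQ, h1, oddPart_oddPart]
    · rw [hQ, h1]

end
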